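/- Let a, b > 0 and R > 0, and consider the second-stage problem: minimize P₁ + P₂ over P₁, P₂ ≥ 0 subject to log(1 + e^{−R} a P₁) + log(1 + b P₂) ≥ R. If b ≤ e^{−2R} a, then the pure NOMA point (P₁, P₂) = (e^R(e^R − 1)/a, 0) is a global minimizer, and the optimal value is e^R(e^R − 1)/a. -/

import Mathlib

/-- Feasibility for the second-stage problem (user 2's power minimization after user 1
transmits at its OMA power). -/
noncomputable def FeasStage2 (a b R p1 p2 : ℝ) : Prop :=
  0 ≤ p1 ∧ 0 ≤ p2 ∧
  R ≤ Real.log (1 + Real.exp (-R) * a * p1) + Real.log (1 + b * p2)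

/-- If `b ≤ e^{-2R} a`, the pure NOMA point `(e^R (e^R - 1)/a, 0)` is a global minimizer of
the second-stage problem, and the optimal value is `e^R (e^R - 1)/a`. -/
theorem stmt_5 (a b R : ℝ) (ha : 0 < a) (hb : 0 < b) (hR : 0 < R)
    (hba : b ≤ Real.exp (-(2 * R)) * a) :
    FeasStage2 a b R (Real.exp R * (Real.exp R - 1) / a) 0 ∧
    (∀ p1 p2, FeasStage2 a b R p1 p2 → Real.exp R * (Real.exp R - 1) / a ≤ p1 + p2) := by
  have hE1 : 1 < Real.exp R := by
    have := Real.add_one_lt_exp (ne_of_gt hR); linarith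
  have hEpos : 0 < Real.exp R := Real.exp_pos R
  constructor
  · refine ⟨?_, le_refl 0, ?_⟩
    · apply div_nonneg _ ha.le; nlinarith
    · have h1 : Real.exp (-R) * a * (Real.exp R * (Real.exp R - 1) / a) = Real.exp R - 1 := by
        rw [Real.exp_neg]
        field_simp
      rw [h1]
      simp only [mul_zero, add_zero, Real.log_one]
      rw [show (1 : ℝ) + (Real.exp R - 1) = Real.exp R by ring, Real.log_exp]
  · rintro p1 p2 ⟨hp1, hp2, hcon⟩
    set x := Real.exp (-R) * a * p1 with hx
    set y := b * p2 with hy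
    have hx0 : 0 ≤ x := by positivity
    have hy0 : 0 ≤ y := by positivity
    have hprod : Real.exp R ≤ (1 + x) * (1 + y) := by
      have h1 : (0:ℝ) < 1 + x := by linarith
      have h2 : (0:ℝ) < 1 + y := by linarith
      calc Real.exp R ≤ Real.exp (Real.log (1 + x) + Real.log (1 + y)) :=
            Real.exp_le_exp.mpr hcon
        _ = (1 + x) * (1 + y) := by
            rw [Real.exp_add, Real.exp_log h1, Real.exp_log h2]
    -- p1 = exp R * x / a
    have hp1x : p1 = Real.exp R * x / a := by
      rw [hx]
      field_simp
      rw [mul_assoc, ← Real.exp_add]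
      simp
    have hb2 : Real.exp (2 * R) * b ≤ a := by
      have := mul_le_mul_of_nonneg_left hba (le_of_lt (Real.exp_pos (2 * R)))
      rwa [← mul_assoc, ← Real.exp_add, show 2 * R + -(2 * R) = 0 by ring, Real.exp_zero,
        one_mul] at this
    have hp2y : Real.exp (2 * R) * y / a ≤ p2 := by
      rw [div_le_iff₀ ha, hy]
      calc Real.exp (2 * R) * (b * p2) = (Real.exp (2 * R) * b) * p2 := by ring
        _ ≤ a * p2 := mul_le_mul_of_nonneg_right hb2 hp2
        _ = p2 * a := by ring
    rcases le_or_gt (Real.exp R - 1) x with hcase | hcase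
    · -- p1 alone suffices
      have : Real.exp R * (Real.exp R - 1) / a ≤ p1 := by
        rw [hp1x, div_le_div_iff₀ ha ha]
        nlinarith [mul_nonneg (mul_nonneg hEpos.le ha.le) (sub_nonneg.mpr hcase)]
      linarith
    · -- x < exp R - 1
      have hkey : Real.exp R - 1 ≤ x + Real.exp R * y := by
        have h1 : x + y + x * y ≥ Real.exp R - 1 := by nlinarith
        nlinarith [mul_nonneg hy0 (le_of_lt (sub_pos.mpr (by linarith : x < Real.exp R - 1)))]
      have h2R : Real.exp (2 * R) = Real.exp R * Real.exp R := by
        rw [← Real.exp_add]; ring_nf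
      have : Real.exp R * (Real.exp R - 1) / a ≤ Real.exp R * x / a + Real.exp (2 * R) * y / a := by
        rw [← add_div, div_le_div_iff₀ ha ha, h2R]
        nlinarith [mul_nonneg (mul_nonneg hEpos.le ha.le) (sub_nonneg.mpr hkey)]
      calc Real.exp R * (Real.exp R - 1) / a
          ≤ Real.exp R * x / a + Real.exp (2 * R) * y / a := this
        _ ≤ p1 + p2 := by rw [hp1x]; linarith
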